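/- For every integer d ≥ 1 and every integer g with 0 ≤ g ≤ m_d, there exists a finite O-sequence of multiplicity d whose genus equals g; that is, {0, 1, …, m_d} ⊆ G_d, where G_d denotes the set of genera of finite O-sequences of multiplicity d. -/

import Mathlib

/-- The Macaulay bound `a^⟨t⟩`: if `a = C(k_t,t) + C(k_{t-1},t-1) + ⋯ + C(k_j,j)` is the
binomial expansion of `a` in base `t`, then `a^⟨t⟩ = C(k_t+1,t+1) + ⋯ + C(k_j+1,j+1)`.
Computed greedily; `mac t a = a^⟨t⟩` for `t ≥ 1`. -/
def mac : ℕ → ℕ → ℕ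
  | 0, _ => 0
  | t+1, a =>
    if a = 0 then 0
    else
      Nat.choose (Nat.findGreatest (fun n => Nat.choose n (t+1) ≤ a) (a + t + 1) + 1) (t+2) +
        mac t (a - Nat.choose (Nat.findGreatest (fun n => Nat.choose n (t+1) ≤ a) (a + t + 1)) (t+1))

/-- `h : ℕ → ℕ` is a finite O-sequence of length `s`: `h 0 = 1`, the entries `h 0, …, h (s-1)`
are positive, entries from index `s` on are zero, and `h (t+1) ≤ (h t)^⟨t⟩` for all `t ≥ 1`. -/
def IsOSeq (h : ℕ → ℕ) (s : ℕ) : Prop :=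
  h 0 = 1 ∧ (∀ i, 0 < h i ↔ i < s) ∧ ∀ t, 1 ≤ t → h (t + 1) ≤ mac t (h t)

/-- The multiplicity `e(h) = h_0 + ⋯ + h_{s-1}` of a finite O-sequence of length `s`. -/
def mult (h : ℕ → ℕ) (s : ℕ) : ℕ := ∑ i ∈ Finset.range s, h i

/-- The genus `g(h) = Σ_{j=2}^{s-1} (j-1)·h_j` of a finite O-sequence of length `s`. -/
def genus (h : ℕ → ℕ) (s : ℕ) : ℕ := ∑ j ∈ Finset.range s, (j - 1) * h j

/-- The sequence obtained from `h` by increasing the `i`-th entry by `1`, i.e. `h + e_i`. -/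
def addE (h : ℕ → ℕ) (i : ℕ) : ℕ → ℕ := fun j => if j = i then h j + 1 else h j

/-- The sequence obtained from `h` by decreasing the `i`-th entry by `1`, i.e. `h - e_i`. -/
def subE (h : ℕ → ℕ) (i : ℕ) : ℕ → ℕ := fun j => if j = i then h j - 1 else h j

/-- The total order on finite O-sequences of the same length: `oLT h k` iff `h_ℓ < k_ℓ`
where `ℓ = max{ j : h_j ≠ k_j }`. -/
def oLT (h k : ℕ → ℕ) : Prop := ∃ ℓ, h ℓ < k ℓ ∧ ∀ j, ℓ < j → h j = k j

/-- The set of genera of finite O-sequences of multiplicity `d` and length `s`. -/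
def genusSet (d s : ℕ) : Set ℕ := {g | ∃ h, IsOSeq h s ∧ mult h s = d ∧ genus h s = g}

/-- `G_d`: the set of genera of finite O-sequences of multiplicity `d` (of any length). -/
def GSet (d : ℕ) : Set ℕ := {g | ∃ h s, IsOSeq h s ∧ mult h s = d ∧ genus h s = g}

/-- `g` is a gap in `R_d = [0, C(d-1,2)]`: it lies in the range but is not the genus of any
finite O-sequence of multiplicity `d`. -/
def IsGap (d g : ℕ) : Prop :=
  g ≤ Nat.choose (d - 1) 2 ∧ ∀ h s, IsOSeq h s → mult h s = d → genus h s ≠ g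

/-- The O-sequence `(1, d-s+1, 1^{s-2})`, minimal in `𝒢_d^s`. -/
def minSeq (d s : ℕ) : ℕ → ℕ :=
  fun j => if j = 0 then 1 else if j = 1 then d - s + 1 else if j < s then 1 else 0

/-- The O-sequence `(1, 2^{d-s}, 1^{2s-d-1})`, maximal in `𝒢_d^s`. -/
def maxSeq (d s : ℕ) : ℕ → ℕ :=
  fun j => if j = 0 then 1 else if j ≤ d - s then 2 else if j < s then 1 else 0

/-- The O-sequence `(1, d-1)`. -/
def twoSeq (d : ℕ) : ℕ → ℕ := fun j => if j = 0 then 1 else if j = 1 then d - 1 else 0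

/-- The operation `h ↦ h - e_{s-1} + e_1` on a sequence of length `s`. -/
def downUp (h : ℕ → ℕ) (s : ℕ) : ℕ → ℕ :=
  fun j => if j = s - 1 then h j - 1 else if j = 1 then h j + 1 else h j

/-- The largest index `1 ≤ j ≤ s-1` with `h j > 1` (and `0` if there is none). -/
def topIdx (h : ℕ → ℕ) (s : ℕ) : ℕ := Nat.findGreatest (fun j => 1 < h j) (s - 1)

/-- The operation `h ↦ h - e_i + e_1` where `i = topIdx h s`. -/
def shiftDown (h : ℕ → ℕ) (s : ℕ) : ℕ → ℕ :=
  fun j => if j = topIdx h s then h j - 1 else if j = 1 then h j + 1 else h j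

/-- Auxiliary list `[m_n, m_{n-1}, …, m_1]` for the recursively defined sequence `(m_d)`. -/
def mListAux : ℕ → List ℕ
  | 0 => []
  | n+1 =>
    let prev := mListAux n
    let newVal :=
      if n = 0 then 0
      else
        (List.range' 2 (n - 1)).foldl
          (fun M k =>
            if Nat.choose k 2 - 1 ≤ M then max M (prev.getD (k - 1) 0 + Nat.choose k 2) else M)
          (prev.getD 0 0)
    newVal :: prev

/-- The sequence `(m_d)_{d ≥ 1}`: `m_1 = 0` and, for `d ≥ 2`, `m_d` is obtained from
`M := m_{d-1}` by running over `k = 2, …, d-1` and replacing `M` by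
`max M (m_{d-k} + C(k,2))` whenever `C(k,2) - 1 ≤ M`. -/
def mSeq (d : ℕ) : ℕ := (mListAux d).getD 0 0

/-! ### Auxiliary lemmas on the Macaulay bound `mac` -/

def mg (t a : ℕ) : ℕ := Nat.findGreatest (fun n => Nat.choose n (t+1) ≤ a) (a + t + 1)

lemma mac_zero (a : ℕ) : mac 0 a = 0 := rfl

lemma mac_succ_eq (t a : ℕ) : mac (t+1) a =
    if a = 0 then 0 else
      Nat.choose (mg t a + 1) (t+2) + mac t (a - Nat.choose (mg t a) (t+1)) := rfl

lemma choose_rec2 (m : ℕ) : Nat.choose (m+1) 2 = Nat.choose m 1 + Nat.choose m 2 :=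
  Nat.choose_succ_succ m 1

lemma choose_recu (n u : ℕ) : Nat.choose (n+1) (u+2) = Nat.choose n (u+1) + Nat.choose n (u+2) :=
  Nat.choose_succ_succ n (u+1)

lemma choose_recu3 (n u : ℕ) : Nat.choose (n+1) (u+3) = Nat.choose n (u+2) + Nat.choose n (u+3) :=
  Nat.choose_succ_succ n (u+2)

lemma choose_lt (a t : ℕ) : a < Nat.choose (a + t + 1) (t + 1) := by
  have h1 : Nat.choose (a + t + 1) (t + 1) = Nat.choose (a + t + 1) a := by
    rw [← Nat.choose_symm (by omega : t + 1 ≤ a + t + 1)]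
    congr 1; omega
  have h2 : Nat.choose (a + 1) a ≤ Nat.choose (a + t + 1) a :=
    Nat.choose_le_choose a (by omega)
  rw [h1]
  have := Nat.choose_succ_self_right a
  omega

lemma mg_bound (t a : ℕ) : mg t a ≤ a + t + 1 := Nat.findGreatest_le _

lemma mg_le (t a : ℕ) : Nat.choose (mg t a) (t+1) ≤ a :=
  Nat.findGreatest_spec (P := fun n => Nat.choose n (t+1) ≤ a) (Nat.zero_le _)
    (by simp [Nat.choose_eq_zero_of_lt])

lemma mg_ge (t a : ℕ) (ha : 1 ≤ a) : t + 1 ≤ mg t a :=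
  Nat.le_findGreatest (by omega) (by simpa using ha)

lemma mg_lt (t a : ℕ) : a < Nat.choose (mg t a + 1) (t + 1) := by
  have hb : mg t a < a + t + 1 := by
    rcases Nat.lt_or_ge (mg t a) (a + t + 1) with h | h
    · exact h
    · exfalso
      have h2 : mg t a = a + t + 1 := le_antisymm (mg_bound t a) h
      have := mg_le t a
      rw [h2] at this
      exact absurd this (not_le.mpr (choose_lt a t))
  by_contra hc
  push_neg at hc
  exact Nat.findGreatest_is_greatest (P := fun n => Nat.choose n (t+1) ≤ a)
    (n := a + t + 1) (k := mg t a + 1) (Nat.lt_succ_self _) (by omega) hc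

lemma mg_mono (t : ℕ) {a b : ℕ} (hab : a ≤ b) : mg t a ≤ mg t b :=
  Nat.le_findGreatest (le_trans (mg_bound t a) (by omega))
    (le_trans (mg_le t a) hab)

/-- If `r < C(m, s+1)` then `mac (s+1) r < C(m+1, s+2)`. -/
lemma macH : ∀ s m r : ℕ, r < Nat.choose m (s+1) → mac (s+1) r < Nat.choose (m+1) (s+2) := by
  intro s
  induction s with
  | zero =>
    intro m r hr
    rw [Nat.choose_one_right] at hr
    rcases Nat.eq_zero_or_pos r with h0 | h0
    · subst h0
      rw [mac_succ_eq 0 0, if_pos rfl]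
      exact Nat.choose_pos (by omega)
    · have h1 : Nat.choose (mg 0 r) 1 ≤ r := mg_le 0 r
      have h2 : r < Nat.choose (mg 0 r + 1) 1 := mg_lt 0 r
      rw [Nat.choose_one_right] at h1
      rw [Nat.choose_one_right] at h2
      have hn : mg 0 r = r := by omega
      rw [mac_succ_eq 0 r, if_neg (by omega), hn, Nat.choose_one_right, Nat.sub_self, mac_zero,
        show (0:ℕ)+2 = 2 from rfl]
      have hb : Nat.choose (r+1) 2 ≤ Nat.choose m 2 := Nat.choose_le_choose 2 (by omega)
      have hlt := choose_rec2 m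
      have hp : 0 < Nat.choose m 1 := Nat.choose_pos (by omega)
      omega
  | succ u IH =>
    intro m r hr
    rw [show u+1+1 = u+2 from rfl] at hr
    have hm : u + 2 ≤ m := by
      by_contra h
      push_neg at h
      rw [Nat.choose_eq_zero_of_lt (by omega)] at hr
      omega
    rcases Nat.eq_zero_or_pos r with h0 | h0
    · subst h0
      rw [mac_succ_eq (u+1) 0, if_pos rfl]
      exact Nat.choose_pos (by omega)
    have h1 : Nat.choose (mg (u+1) r) (u+2) ≤ r := mg_le (u+1) r
    have h2 : r < Nat.choose (mg (u+1) r + 1) (u+2) := mg_lt (u+1) r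
    have h3 : u + 2 ≤ mg (u+1) r := mg_ge (u+1) r h0
    set n := mg (u+1) r with hn
    have hnm : n < m := by
      by_contra h
      push_neg at h
      have := Nat.choose_le_choose (u+2) h
      omega
    have hrec := choose_recu n u
    have hrem : r - Nat.choose n (u+2) < Nat.choose n (u+1) := by omega
    have hM : mac (u+1) (r - Nat.choose n (u+2)) < Nat.choose (n+1) (u+2) := IH n _ hrem
    rw [mac_succ_eq (u+1) r, if_neg (by omega), ← hn,
      show u+1+2 = u+3 from rfl, show u+1+1 = u+2 from rfl]
    have b1 : Nat.choose (n+1) (u+3) ≤ Nat.choose m (u+3) := Nat.choose_le_choose _ (by omega)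
    have b2 : Nat.choose (n+1) (u+2) ≤ Nat.choose m (u+2) := Nat.choose_le_choose _ (by omega)
    have b3 := choose_recu3 m u
    rw [show u+1+2 = u+3 from rfl]
    omega

/-- Strict monotonicity of `mac (s+1)`. -/
lemma mac_strict (s : ℕ) : StrictMono (mac (s+1)) := by
  apply strictMono_nat_of_lt_succ
  induction s with
  | zero =>
    intro a
    rcases Nat.eq_zero_or_pos a with h0 | h0
    · subst h0
      rw [mac_succ_eq 0 0, mac_succ_eq 0 1, if_pos rfl, if_neg one_ne_zero]
      have h3 : 1 ≤ mg 0 1 := mg_ge 0 1 le_rfl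
      have hp : 0 < Nat.choose (mg 0 1 + 1) (0+2) := Nat.choose_pos (by omega)
      omega
    · have h1a : Nat.choose (mg 0 a) 1 ≤ a := mg_le 0 a
      have h2a : a < Nat.choose (mg 0 a + 1) 1 := mg_lt 0 a
      rw [Nat.choose_one_right] at h1a; rw [Nat.choose_one_right] at h2a
      have hna : mg 0 a = a := by omega
      have h1b : Nat.choose (mg 0 (a+1)) 1 ≤ a+1 := mg_le 0 (a+1)
      have h2b : a+1 < Nat.choose (mg 0 (a+1) + 1) 1 := mg_lt 0 (a+1)
      rw [Nat.choose_one_right] at h1b; rw [Nat.choose_one_right] at h2b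
      have hnb : mg 0 (a+1) = a+1 := by omega
      rw [mac_succ_eq 0 a, mac_succ_eq 0 (a+1), if_neg (by omega), if_neg (by omega), hna, hnb,
        Nat.choose_one_right, Nat.choose_one_right, Nat.sub_self, Nat.sub_self, mac_zero,
        show (0:ℕ)+2 = 2 from rfl]
      have hrec := choose_rec2 (a+1)
      have hp : 0 < Nat.choose (a+1) 1 := Nat.choose_pos (by omega)
      omega
  | succ u IH =>
    intro a
    rcases Nat.eq_zero_or_pos a with h0 | h0
    · subst h0
      rw [mac_succ_eq (u+1) 0, mac_succ_eq (u+1) 1, if_pos rfl, if_neg one_ne_zero]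
      have h3 : u + 2 ≤ mg (u+1) 1 := mg_ge (u+1) 1 le_rfl
      have hp : 0 < Nat.choose (mg (u+1) 1 + 1) (u+1+2) := Nat.choose_pos (by omega)
      omega
    · have h1 : Nat.choose (mg (u+1) a) (u+2) ≤ a := mg_le (u+1) a
      have h2 : a < Nat.choose (mg (u+1) a + 1) (u+2) := mg_lt (u+1) a
      have h3 : u + 2 ≤ mg (u+1) a := mg_ge (u+1) a h0
      have h1' : Nat.choose (mg (u+1) (a+1)) (u+2) ≤ a + 1 := mg_le (u+1) (a+1)
      have h2' : a + 1 < Nat.choose (mg (u+1) (a+1) + 1) (u+2) := mg_lt (u+1) (a+1)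
      have hle : mg (u+1) a ≤ mg (u+1) (a+1) := mg_mono (u+1) (by omega)
      rw [mac_succ_eq (u+1) a, mac_succ_eq (u+1) (a+1), if_neg (by omega), if_neg (by omega),
        show u+1+2 = u+3 from rfl, show u+1+1 = u+2 from rfl]
      set n := mg (u+1) a with hn
      set n' := mg (u+1) (a+1) with hn'
      rcases eq_or_lt_of_le hle with heq | hlt
      · rw [← heq]
        have harg : a + 1 - Nat.choose n (u+2) = (a - Nat.choose n (u+2)) + 1 := by omega
        rw [harg]
        have := IH (a - Nat.choose n (u+2))
        omega
      · have hrec := choose_recu n u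
        have hrem : a - Nat.choose n (u+2) < Nat.choose n (u+1) := by omega
        have hM : mac (u+1) (a - Nat.choose n (u+2)) < Nat.choose (n+1) (u+2) := macH u n _ hrem
        have b1 : Nat.choose (n+2) (u+3) ≤ Nat.choose (n'+1) (u+3) :=
          Nat.choose_le_choose _ (by omega)
        have b2 : Nat.choose (n+1+1) (u+3) = Nat.choose (n+1) (u+2) + Nat.choose (n+1) (u+3) :=
          choose_recu3 (n+1) u
        have b3 : Nat.choose (n+2) (u+3) = Nat.choose (n+1+1) (u+3) := rfl
        omega

lemma mac_mono (s : ℕ) {a b : ℕ} (h : a ≤ b) : mac (s+1) a ≤ mac (s+1) b :=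
  (mac_strict s).monotone h

lemma mac_succ_ge (s a : ℕ) : mac (s+1) a + 1 ≤ mac (s+1) (a+1) :=
  mac_strict s (Nat.lt_succ_self a)

/-! ### The bump construction -/

def bump (h : ℕ → ℕ) (k : ℕ) : ℕ → ℕ := fun j => if 1 ≤ j ∧ j ≤ k then h j + 1 else h j

lemma sum_Icc_pred (k : ℕ) : ∑ j ∈ Finset.Icc 1 k, (j - 1) = Nat.choose k 2 := by
  induction k with
  | zero => simp
  | succ k IH =>
    rw [Finset.sum_Icc_succ_top (by omega), IH]
    have := choose_rec2 k
    rw [Nat.choose_one_right] at this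
    omega

lemma bump_spec {h : ℕ → ℕ} {s : ℕ} (k : ℕ) (hk : 1 ≤ k) (H : IsOSeq h s) :
    IsOSeq (bump h k) (max s (k+1)) ∧
    mult (bump h k) (max s (k+1)) = mult h s + k ∧
    genus (bump h k) (max s (k+1)) = genus h s + Nat.choose k 2 := by
  obtain ⟨h0, hpos, hmac⟩ := H
  have hs1 : 1 ≤ s := (hpos 0).mp (by simp [h0])
  have hz : ∀ i, s ≤ i → h i = 0 := by
    intro i hi
    by_contra hne
    have := (hpos i).mp (Nat.pos_of_ne_zero hne)
    omega
  have hsub : Finset.Icc 1 k ⊆ Finset.range (max s (k+1)) := by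
    intro x hx
    rw [Finset.mem_Icc] at hx
    rw [Finset.mem_range]
    have := le_max_right s (k+1)
    omega
  have hinter : Finset.range (max s (k+1)) ∩ Finset.Icc 1 k = Finset.Icc 1 k :=
    Finset.inter_eq_right.mpr hsub
  have hext : ∀ f : ℕ → ℕ, (∀ i, s ≤ i → f i = 0) →
      ∑ i ∈ Finset.range (max s (k+1)), f i = ∑ i ∈ Finset.range s, f i := by
    intro f hf
    symm
    apply Finset.sum_subset (Finset.range_subset_range.mpr (le_max_left s (k+1)))
    intro i _ hi
    rw [Finset.mem_range] at hi
    exact hf i (by omega)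
  refine ⟨⟨?_, ?_, ?_⟩, ?_, ?_⟩
  · simp [bump, h0]
  · intro i
    have hp := hpos i
    have h1 := le_max_left s (k+1)
    have h2 := le_max_right s (k+1)
    rcases max_choice s (k+1) with hc | hc <;>
      rw [hc] at h1 h2 ⊢ <;>
      simp only [bump] <;>
      split_ifs with hik <;> omega
  · intro t ht
    obtain ⟨u, rfl⟩ : ∃ u, t = u + 1 := ⟨t-1, by omega⟩
    have hm := hmac (u+1) (by omega)
    have hge := mac_succ_ge u (h (u+1))
    have hmono := mac_mono u (Nat.le_succ (h (u+1)))
    simp only [bump]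
    split_ifs with hA hB hB <;> omega
  · unfold mult
    have e1 : ∑ i ∈ Finset.range (max s (k+1)), bump h k i
        = ∑ i ∈ Finset.range (max s (k+1)), (h i + if i ∈ Finset.Icc 1 k then 1 else 0) := by
      apply Finset.sum_congr rfl
      intro i _
      simp only [bump, Finset.mem_Icc]
      split_ifs <;> omega
    have e3 : ∑ i ∈ Finset.range (max s (k+1)), (if i ∈ Finset.Icc 1 k then (1:ℕ) else 0) = k := by
      rw [Finset.sum_ite_mem, hinter]
      simp
    rw [e1, Finset.sum_add_distrib, e3, hext h hz]
  · unfold genus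
    have e1 : ∑ j ∈ Finset.range (max s (k+1)), (j - 1) * bump h k j
        = ∑ j ∈ Finset.range (max s (k+1)),
            ((j - 1) * h j + if j ∈ Finset.Icc 1 k then j - 1 else 0) := by
      apply Finset.sum_congr rfl
      intro j _
      simp only [bump, Finset.mem_Icc]
      split_ifs with hc
      · rw [Nat.mul_add, Nat.mul_one]
      · rw [Nat.add_zero]
    have e3 : ∑ j ∈ Finset.range (max s (k+1)), (if j ∈ Finset.Icc 1 k then j - 1 else 0)
        = Nat.choose k 2 := by
      rw [Finset.sum_ite_mem, hinter]
      exact sum_Icc_pred k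
    have e2 : ∑ j ∈ Finset.range (max s (k+1)), (j - 1) * h j
        = ∑ j ∈ Finset.range s, (j - 1) * h j :=
      hext _ (fun i hi => by rw [hz i hi, Nat.mul_zero])
    rw [e1, Finset.sum_add_distrib, e3, e2]

/-! ### `GSet` lemmas -/

lemma gset_bump {e g : ℕ} (k : ℕ) (hk : 1 ≤ k) (hg : g ∈ GSet e) :
    g + Nat.choose k 2 ∈ GSet (e + k) := by
  obtain ⟨h, s, H, hm, hgen⟩ := hg
  obtain ⟨H', hm', hg'⟩ := bump_spec k hk H
  exact ⟨bump h k, max s (k+1), H', by rw [hm', hm], by rw [hg', hgen]⟩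

lemma gset_succ {e g : ℕ} (hg : g ∈ GSet e) : g ∈ GSet (e+1) := by
  have := gset_bump 1 le_rfl hg
  simpa using this

lemma gset_one : (0:ℕ) ∈ GSet 1 := by
  refine ⟨fun j => if j = 0 then 1 else 0, 1, ⟨rfl, ?_, ?_⟩, ?_, ?_⟩
  · intro i
    by_cases hi : i = 0 <;> simp [hi]
  · intro t ht
    have h1 : t + 1 ≠ 0 := by omega
    simp [h1]
  · simp [mult]
  · simp [genus]

/-! ### The recursion for `mSeq` -/

lemma mSeq_one : mSeq 1 = 0 := rfl

lemma mListAux_getD : ∀ n i, (mListAux n).getD i 0 = mSeq (n - i) := by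
  intro n
  induction n with
  | zero => intro i; simp [mListAux, mSeq]
  | succ n IH =>
    intro i
    cases i with
    | zero => simp [mSeq]
    | succ i =>
      have hcons : ∃ v, mListAux (n+1) = v :: mListAux n := by
        simp only [mListAux]
        exact ⟨_, rfl⟩
      obtain ⟨v, hv⟩ := hcons
      rw [hv, List.getD_cons_succ, Nat.succ_sub_succ]
      exact IH i

lemma fold_cover (d : ℕ) (hd : 1 ≤ d)
    (IH : ∀ e, 1 ≤ e → e < d → ∀ g, g ≤ mSeq e → g ∈ GSet e) :
    ∀ L : List ℕ, (∀ k ∈ L, 2 ≤ k ∧ k < d) → ∀ M, (∀ g, g ≤ M → g ∈ GSet d) →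
    ∀ g, g ≤ L.foldl
      (fun M k => if Nat.choose k 2 - 1 ≤ M then max M (mSeq (d - k) + Nat.choose k 2) else M) M →
      g ∈ GSet d := by
  intro L
  induction L with
  | nil => intro _ M hM g hg; exact hM g hg
  | cons k L IHL =>
    intro hmem M hM
    rw [List.foldl_cons]
    apply IHL (fun k' hk' => hmem k' (List.mem_cons_of_mem _ hk'))
    intro g hg
    by_cases hc : Nat.choose k 2 - 1 ≤ M
    · rw [if_pos hc] at hg
      rcases le_or_gt g M with hgood | hbig
      · exact hM g hgood
      · obtain ⟨hk2, hkd⟩ := hmem k (List.mem_cons_self)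
        have hgle : g ≤ mSeq (d - k) + Nat.choose k 2 := by
          rcases le_max_iff.mp hg with h | h <;> omega
        have hgk : Nat.choose k 2 ≤ g := by omega
        have hmem' : g - Nat.choose k 2 ∈ GSet (d - k) :=
          IH (d-k) (by omega) (by omega) _ (by omega)
        have hres := gset_bump k (by omega) hmem'
        rw [show d - k + k = d from by omega,
          show g - Nat.choose k 2 + Nat.choose k 2 = g from by omega] at hres
        exact hres
    · rw [if_neg hc] at hg
      exact hM g hg

/-- **Continuity.** For every `d ≥ 1` and every `0 ≤ g ≤ m_d`, there exists a
finite O-sequence of multiplicity `d` whose genus equals `g`; i.e. `{0, …, m_d} ⊆ G_d`. -/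
theorem stmt17 (d : ℕ) (hd : 1 ≤ d) : ∀ g : ℕ, g ≤ mSeq d → g ∈ GSet d := by
  induction d using Nat.strong_induction_on with
  | _ d IH =>
    match d, hd with
    | 1, _ =>
      intro g hg
      rw [mSeq_one, Nat.le_zero] at hg
      subst hg
      exact gset_one
    | (n+2), _ =>
      have IH' : ∀ e, 1 ≤ e → e < n+2 → ∀ g, g ≤ mSeq e → g ∈ GSet e := by
        intro e he helt
        exact IH e helt he
      have hunf : mSeq (n+2) = (List.range' 2 (n+1-1)).foldl
          (fun M k => if Nat.choose k 2 - 1 ≤ M then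
            max M ((mListAux (n+1)).getD (k-1) 0 + Nat.choose k 2) else M)
          ((mListAux (n+1)).getD 0 0) := by
        simp only [mSeq, mListAux]
        rw [if_neg (by omega : ¬ n + 1 = 0)]
        rfl
      have hfold : (List.range' 2 (n+1-1)).foldl
          (fun M k => if Nat.choose k 2 - 1 ≤ M then
            max M ((mListAux (n+1)).getD (k-1) 0 + Nat.choose k 2) else M)
          ((mListAux (n+1)).getD 0 0)
          = (List.range' 2 (n+1-1)).foldl
          (fun M k => if Nat.choose k 2 - 1 ≤ M then
            max M (mSeq (n+2 - k) + Nat.choose k 2) else M)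
          ((mListAux (n+1)).getD 0 0) := by
        apply List.foldl_ext
        intro M k hkmem
        rw [List.mem_range'_1] at hkmem
        rw [mListAux_getD, show n+1-(k-1) = n+2-k from by omega]
      intro g hg
      rw [hunf, hfold] at hg
      refine fold_cover (n+2) (by omega) IH' _ ?_ _ ?_ g hg
      · intro k hk
        rw [List.mem_range'_1] at hk
        omega
      · intro g' hg'
        rw [mListAux_getD, Nat.sub_zero] at hg'
        have : g' ∈ GSet (n+1) := IH' (n+1) (by omega) (by omega) g' hg'
        exact gset_succ this
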